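/- Let G be a tree with n edges. Then the characteristic polynomial of the matching arrangement MA(G) equals (t−1)(t−2)⋯(t−n). -/

import Mathlib

set_option linter.unusedSectionVars false
set_option linter.unusedVariables false
set_option linter.unreachableTactic false
set_option linter.unusedTactic false
set_option maxHeartbeats 1000000
set_option synthInstance.maxHeartbeats 400000


open Finset
open scoped Classical
open SimpleGraph

/-- The alternating-sign vector `e_{i₁} - e_{i₂} + e_{i₃} - ⋯` of a list of indices. -/
def altVec {n : ℕ} : List (Fin n) → (Fin n → ℝ)
  | [] => 0
  | i :: l => Pi.single i 1 - altVec l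

/-- The hyperplane (through the origin) with normal vector `v`, i.e. the kernel of
`x ↦ ∑ i, v i * x i`. -/
noncomputable def hyp {n : ℕ} (v : Fin n → ℝ) : Submodule ℝ (Fin n → ℝ) :=
  LinearMap.ker (∑ i, v i • (LinearMap.proj i : (Fin n → ℝ) →ₗ[ℝ] ℝ))

/-- The list of edge numbers along a walk, for a numbering `N` of the edges. -/
def edgeIdx {V : Type*} {n : ℕ} {G : SimpleGraph V} (N : G.edgeSet ≃ Fin n)
    {a b : V} (p : G.Walk a b) : List (Fin n) :=
  p.edges.pmap (fun e he => N ⟨e, he⟩) (fun _ he => p.edges_subset_edgeSet he)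

/-- The matching arrangement `MA(G, N)` of a graph `G` with edge numbering `N`:
the set of hyperplanes `x_{r₁} - x_{r₂} + x_{r₃} - ⋯ = 0`, one for every simple path
and every even simple cycle `(r₁, …, r_m)` of `G`. -/
noncomputable def MASet {V : Type*} {n : ℕ} (G : SimpleGraph V) (N : G.edgeSet ≃ Fin n) :
    Set (Submodule ℝ (Fin n → ℝ)) :=
  {H | (∃ (a b : V) (p : G.Walk a b), 0 < p.length ∧ p.IsPath ∧
          H = hyp (altVec (edgeIdx N p))) ∨
       (∃ (a : V) (p : G.Walk a a), p.IsCycle ∧ Even p.length ∧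
          H = hyp (altVec (edgeIdx N p)))}

/-- The value at `t` of the characteristic polynomial of a (central) arrangement, given by
Whitney's formula `χ_A(t) = ∑_{S ⊆ A} (-1)^{|S|} t^{dim ∩ S}`. -/
noncomputable def charPolyEval {M : Type*} [AddCommGroup M] [Module ℝ M]
    (A : Finset (Submodule ℝ M)) (t : ℝ) : ℝ :=
  ∑ S ∈ A.powerset, (-1 : ℝ) ^ S.card * t ^ (Module.finrank ℝ ↥(S.inf id))

/-- alternating sum of `x` along a list -/
def altSum {n : ℕ} : List (Fin n) → (Fin n → ℝ) → ℝ
  | [], _ => 0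
  | i :: l, x => x i - altSum l x

lemma sum_altVec {n : ℕ} (l : List (Fin n)) (x : Fin n → ℝ) :
    ∑ i, altVec l i * x i = altSum l x := by
  induction l with
  | nil => simp [altVec, altSum]
  | cons i l ih =>
      simp only [altVec, altSum, Pi.sub_apply, sub_mul, Finset.sum_sub_distrib, ih]
      congr 1
      rw [Finset.sum_eq_single i]
      · simp
      · intro b _ hb; simp [Pi.single_apply, hb]
      · simp
lemma mem_hyp {n : ℕ} (v : Fin n → ℝ) (x : Fin n → ℝ) :
    x ∈ hyp v ↔ ∑ i, v i * x i = 0 := by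
  simp [hyp, LinearMap.mem_ker, LinearMap.sum_apply, LinearMap.smul_apply, smul_eq_mul]

lemma hyp_smul {n : ℕ} (c : ℝ) (hc : c ≠ 0) (v : Fin n → ℝ) : hyp (c • v) = hyp v := by
  ext x
  simp only [mem_hyp, Pi.smul_apply, smul_eq_mul, mul_assoc, ← Finset.mul_sum]
  constructor
  · intro h; rcases mul_eq_zero.1 h with h|h
    · exact absurd h hc
    · exact h
  · intro h; rw [h, mul_zero]

open SimpleGraph

section
variable {V : Type*} [Fintype V] [DecidableEq V] {G : SimpleGraph V}

noncomputable def eps (G : SimpleGraph V) (r v : V) : ℝ := (-1) ^ (G.dist r v)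

lemma eps_ne_zero (r v : V) : eps G r v ≠ 0 := by
  simp [eps]

lemma eps_sq (r v : V) : eps G r v * eps G r v = 1 := by
  simp [eps, ← pow_add, ← two_mul, pow_mul]

lemma eps_adj (hG : G.IsTree) (r : V) {u v : V} (h : G.Adj u v) :
    eps G r u = - eps G r v := by
  have hc := hG.isConnected
  obtain ⟨p, hp, hpl⟩ := hc.exists_path_of_dist r u
  obtain ⟨q, hq, hql⟩ := hc.exists_path_of_dist r v
  have hne : G.dist r u ≠ G.dist r v := by
    intro hd
    by_cases hv : v ∈ p.support
    · -- then dist r v < dist r u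
      have h1 : G.dist r v ≤ (p.takeUntil v hv).length := dist_le _
      have h2 : (p.takeUntil v hv).length + (p.dropUntil v hv).length = p.length := by
        rw [← SimpleGraph.Walk.length_append, SimpleGraph.Walk.take_spec]
      have h3 : 0 < (p.dropUntil v hv).length := by
        rcases Nat.eq_zero_or_pos (p.dropUntil v hv).length with h0 | h0
        · exact absurd (SimpleGraph.Walk.eq_of_length_eq_zero h0) (G.ne_of_adj h.symm)
        · exact h0
      omega
    · -- p.concat-ish : cons on reverse gives a path v → r of length d+1
      have hpath : (SimpleGraph.Walk.cons h.symm p.reverse).IsPath := by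
        rw [SimpleGraph.Walk.cons_isPath_iff]
        exact ⟨hp.reverse, by simpa using hv⟩
      have := (hG.existsUnique_path v r).unique hpath hq.reverse
      have hlen := congrArg SimpleGraph.Walk.length this
      simp only [SimpleGraph.Walk.length_cons, SimpleGraph.Walk.length_reverse] at hlen
      omega
  have h1 : G.dist r v ≤ G.dist r u + 1 := by
    have := dist_le (p.concat h)
    rwa [SimpleGraph.Walk.length_concat, hpl] at this
  have h2 : G.dist r u ≤ G.dist r v + 1 := by
    have := dist_le (q.concat h.symm)
    rwa [SimpleGraph.Walk.length_concat, hql] at this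
  have : G.dist r v = G.dist r u + 1 ∨ G.dist r u = G.dist r v + 1 := by omega
  rcases this with h' | h' <;> simp [eps, h', pow_succ]

lemma eps_walk (hG : G.IsTree) (r : V) {a b : V} (p : G.Walk a b) :
    eps G r b = (-1) ^ p.length * eps G r a := by
  induction p with
  | nil => simp
  | cons h q ih =>
      rw [ih, eps_adj hG r h]
      simp only [SimpleGraph.Walk.length_cons, pow_succ]
      ring

noncomputable def edgeVal (G : SimpleGraph V) (r : V) (y : V → ℝ) : Sym2 V → ℝ :=
  Sym2.lift ⟨fun u v => eps G r u * y u + eps G r v * y v, fun u v => by ring⟩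

@[simp] lemma edgeVal_mk (r : V) (y : V → ℝ) (u v : V) :
    edgeVal G r y s(u, v) = eps G r u * y u + eps G r v * y v := by
  simp [edgeVal]

lemma edgeVal_add (r : V) (y z : V → ℝ) (e : Sym2 V) :
    edgeVal G r (y + z) e = edgeVal G r y e + edgeVal G r z e := by
  induction e using Sym2.ind with
  | _ u v => simp; ring

lemma edgeVal_smul (r : V) (c : ℝ) (y : V → ℝ) (e : Sym2 V) :
    edgeVal G r (c • y) e = c * edgeVal G r y e := by
  induction e using Sym2.ind with
  | _ u v => simp; ring

variable {n : ℕ} (N : G.edgeSet ≃ Fin n)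

noncomputable def psi (G : SimpleGraph V) (r : V) (N : G.edgeSet ≃ Fin n) :
    (V → ℝ) →ₗ[ℝ] (Fin n → ℝ) where
  toFun y i := edgeVal G r y (N.symm i : G.edgeSet)
  map_add' y z := funext fun i => edgeVal_add r y z _
  map_smul' c y := funext fun i => edgeVal_smul r c y _

@[simp] lemma psi_apply (r : V) (y : V → ℝ) (i : Fin n) :
    psi G r N y i = edgeVal G r y (N.symm i : G.edgeSet) := rfl

lemma psi_apply_edge (r : V) (y : V → ℝ) (e : Sym2 V) (he : e ∈ G.edgeSet) :
    psi G r N y (N ⟨e, he⟩) = edgeVal G r y e := by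
  simp [psi_apply, Equiv.symm_apply_apply]

lemma edgeIdx_cons {a c b : V} (h : G.Adj a c) (q : G.Walk c b) :
    edgeIdx N (SimpleGraph.Walk.cons h q) = N ⟨s(a,c), h⟩ :: edgeIdx N q := by
  simp [edgeIdx]

lemma altSum_psi (r : V) {a b : V} (p : G.Walk a b) (y : V → ℝ) :
    altSum (edgeIdx N p) (psi G r N y)
      = eps G r a * y a - (-1)^p.length * (eps G r b * y b) := by
  induction p with
  | nil => simp [edgeIdx, altSum]
  | @cons a c b h q ih =>
      rw [edgeIdx_cons]
      simp only [altSum, ih, psi_apply_edge N r y s(a,c) h, edgeVal_mk, SimpleGraph.Walk.length_cons, pow_succ]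
      ring

lemma psi_mem_hyp_iff (hG : G.IsTree) (r : V) {a b : V} (p : G.Walk a b) (y : V → ℝ) :
    psi G r N y ∈ hyp (altVec (edgeIdx N p)) ↔ y a = y b := by
  rw [mem_hyp, sum_altVec, altSum_psi N r p y, eps_walk hG r p]
  have h2 : ((-1:ℝ))^p.length * ((-1:ℝ))^p.length = 1 := by
    rw [← pow_add, ← two_mul, pow_mul]; simp
  have key : eps G r a * y a - (-1:ℝ)^p.length * ((-1:ℝ)^p.length * eps G r a * y b)
      = eps G r a * (y a - y b) := by
    linear_combination (-(eps G r a * y b)) * h2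
  rw [key, mul_eq_zero, sub_eq_zero]
  simp [eps_ne_zero]

lemma edgeVal_one (hG : G.IsTree) (r : V) (e : Sym2 V) (he : e ∈ G.edgeSet) :
    edgeVal G r (fun _ => 1) e = 0 := by
  induction e using Sym2.ind with
  | _ u v =>
      rw [edgeVal_mk]
      have := eps_adj hG r ((SimpleGraph.mem_edgeSet _).mp he)
      rw [mul_one, mul_one, this]; ring

lemma psi_one (hG : G.IsTree) (r : V) : psi G r N (fun _ => 1) = 0 := by
  funext i
  rw [psi_apply, edgeVal_one hG r _ (N.symm i).2]
  rfl

lemma ker_psi (hG : G.IsTree) (r : V) :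
    LinearMap.ker (psi G r N) = Submodule.span ℝ {(fun _ => 1 : V → ℝ)} := by
  ext y
  rw [LinearMap.mem_ker, Submodule.mem_span_singleton]
  constructor
  · intro hy
    have hedge : ∀ u v : V, G.Adj u v → eps G r u * y u + eps G r v * y v = 0 := by
      intro u v huv
      have h1 : psi G r N y (N ⟨s(u,v), huv⟩) = 0 := by rw [hy]; rfl
      rwa [psi_apply_edge N r y s(u,v) huv, edgeVal_mk] at h1
    have haux : ∀ {a b : V} (p : G.Walk a b),
        eps G r b * y b = (-1)^p.length * (eps G r a * y a) := by
      intro a b p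
      induction p with
      | nil => simp
      | @cons a c b h q ih =>
          have h3 := hedge _ _ h
          rw [ih, show eps G r c * y c = -(eps G r a * y a) from by linarith]
          simp only [SimpleGraph.Walk.length_cons, pow_succ]
          ring
    refine ⟨y r, funext fun v => ?_⟩
    obtain ⟨p⟩ := hG.isConnected.preconnected r v
    have h1 := haux p
    have her : eps G r r = 1 := by simp [eps, SimpleGraph.dist_self]
    rw [eps_walk hG r p, her] at h1
    simp only [mul_one, one_mul] at h1
    have hne : ((-1:ℝ))^p.length ≠ 0 := pow_ne_zero _ (by norm_num)
    have := mul_left_cancel₀ hne h1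
    simp [← this]
  · rintro ⟨c, rfl⟩
    rw [map_smul, psi_one N hG r, smul_zero]

noncomputable def braid (a b : V) : Submodule ℝ (V → ℝ) :=
  LinearMap.ker ((LinearMap.proj a : (V → ℝ) →ₗ[ℝ] ℝ) - LinearMap.proj b)

@[simp] lemma mem_braid {a b : V} (y : V → ℝ) : y ∈ braid a b ↔ y a = y b := by
  simp [braid, LinearMap.mem_ker, sub_eq_zero]

lemma comap_hyp_path (hG : G.IsTree) (r : V) {a b : V} (p : G.Walk a b) :
    Submodule.comap (psi G r N) (hyp (altVec (edgeIdx N p))) = braid a b := by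
  ext y
  simp [Submodule.mem_comap, psi_mem_hyp_iff N hG r p y]

lemma card_V (hG : G.IsTree) (N : G.edgeSet ≃ Fin n) : Fintype.card V = n + 1 := by
  haveI : Fintype G.edgeSet := Fintype.ofEquiv _ N.symm
  have h := hG.card_edgeFinset
  have h2 : G.edgeFinset.card = n := by
    rw [SimpleGraph.edgeFinset, Set.toFinset_card]
    rw [Fintype.card_congr N, Fintype.card_fin]
  omega

lemma const_one_ne_zero (hG : G.IsTree) : (fun _ => (1:ℝ) : V → ℝ) ≠ 0 := by
  have : Nonempty V := hG.isConnected.nonempty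
  intro h
  have := congrFun h (Classical.arbitrary V)
  norm_num at this

lemma psi_surjective (hG : G.IsTree) (r : V) : Function.Surjective (psi G r N) := by
  rw [← LinearMap.range_eq_top]
  have h1 := LinearMap.finrank_range_add_finrank_ker (psi G r N)
  rw [ker_psi N hG r, finrank_span_singleton (const_one_ne_zero hG)] at h1
  have h2 : Module.finrank ℝ (V → ℝ) = n + 1 := by
    rw [Module.finrank_fintype_fun_eq_card, card_V hG N]
  apply Submodule.eq_top_of_finrank_eq
  rw [Module.finrank_fintype_fun_eq_card, Fintype.card_fin]
  omega

noncomputable def braid2 : Sym2 V → Submodule ℝ (V → ℝ) :=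
  Sym2.lift ⟨braid, fun a b => by ext y; simp [eq_comm]⟩

@[simp] lemma braid2_mk (a b : V) : braid2 s(a,b) = braid a b := by
  simp [braid2]

lemma mem_inf_braid2 (T : Finset (Sym2 V)) (y : V → ℝ) :
    y ∈ T.inf braid2 ↔ ∀ u v : V, s(u,v) ∈ T → y u = y v := by
  rw [Submodule.mem_finsetInf]
  constructor
  · intro h u v huv
    have := h _ huv
    rwa [braid2_mk, mem_braid] at this
  · intro h q hq
    induction q using Sym2.ind with
    | _ u v => rw [braid2_mk, mem_braid]; exact h u v hq

/-- the setoid generated by pairs in `T` -/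
def setT (T : Finset (Sym2 V)) : Setoid V := Relation.EqvGen.setoid (fun u v => s(u,v) ∈ T)

lemma resp_of_eqvGen {α : Type*} (T : Finset (Sym2 V)) (f : V → α)
    (hf : ∀ u v : V, s(u,v) ∈ T → f u = f v) :
    ∀ u v : V, Relation.EqvGen (fun u v => s(u,v) ∈ T) u v → f u = f v := by
  intro u v h
  induction h with
  | rel x y h => exact hf x y h
  | refl => rfl
  | symm x y _ ih => exact ih.symm
  | trans x y z _ _ ih1 ih2 => exact ih1.trans ih2

noncomputable instance (T : Finset (Sym2 V)) : Fintype (Quotient (setT T)) :=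
  Fintype.ofFinite _

/-- functions respecting `T` correspond to functions on the quotient -/
noncomputable def respEquiv (T : Finset (Sym2 V)) (α : Type*) :
    (Quotient (setT T) → α) ≃ {f : V → α // ∀ u v : V, s(u,v) ∈ T → f u = f v} where
  toFun g := ⟨fun v => g (Quotient.mk _ v), fun u v h =>
    congrArg g (Quotient.sound (Relation.EqvGen.rel u v h))⟩
  invFun f := Quotient.lift f.1 (resp_of_eqvGen T f.1 f.2)
  left_inv g := by
    funext q
    induction q using Quotient.ind with
    | _ v => rfl
  right_inv f := by
    ext v
    rfl

lemma finrank_inf_braid2 (T : Finset (Sym2 V)) :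
    Module.finrank ℝ ↥(T.inf braid2) = Fintype.card (Quotient (setT T)) := by
  classical
  let L : (Quotient (setT T) → ℝ) →ₗ[ℝ] (V → ℝ) :=
    LinearMap.funLeft ℝ ℝ (Quotient.mk (setT T))
  have hinj : Function.Injective L :=
    LinearMap.funLeft_injective_of_surjective ℝ ℝ _ (Quotient.mk_surjective)
  have hrange : LinearMap.range L = T.inf braid2 := by
    ext y
    rw [LinearMap.mem_range, mem_inf_braid2]
    constructor
    · rintro ⟨g, rfl⟩ u v h
      exact congrArg g (Quotient.sound (Relation.EqvGen.rel u v h))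
    · intro h
      exact ⟨Quotient.lift y (resp_of_eqvGen T y h), rfl⟩
  rw [← hrange, LinearMap.finrank_range_of_inj hinj,
    Module.finrank_fintype_fun_eq_card]

lemma card_resp (T : Finset (Sym2 V)) (t : ℕ) :
    Nat.card {f : V → Fin t // ∀ u v : V, s(u,v) ∈ T → f u = f v}
      = t ^ (Module.finrank ℝ ↥(T.inf braid2)) := by
  rw [finrank_inf_braid2, ← Nat.card_eq_fintype_card]
  rw [Nat.card_congr (respEquiv T (Fin t)).symm, Nat.card_fun]
  simp [Nat.card_eq_fintype_card]

lemma finrank_comap_psi (hG : G.IsTree) (r : V) (W : Submodule ℝ (Fin n → ℝ)) :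
    Module.finrank ℝ ↥(Submodule.comap (psi G r N) W) = Module.finrank ℝ ↥W + 1 := by
  classical
  set f := psi G r N with hf
  set p := Submodule.comap f W with hp
  have h1 := LinearMap.finrank_range_add_finrank_ker (f.domRestrict p)
  rw [LinearMap.range_domRestrict, LinearMap.ker_domRestrict] at h1
  have h3 : Submodule.map f p = W :=
    Submodule.map_comap_eq_of_surjective (psi_surjective N hG r) W
  have hle : LinearMap.ker f ≤ p := by
    intro x hx
    rw [LinearMap.mem_ker] at hx
    rw [hp, Submodule.mem_comap, hx]
    exact W.zero_mem
  have h5 : Module.finrank ℝ ↥(Submodule.comap p.subtype (LinearMap.ker f))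
      = Module.finrank ℝ ↥(LinearMap.ker f) :=
    (Submodule.comapSubtypeEquivOfLe hle).finrank_eq
  have h6 : Module.finrank ℝ ↥(LinearMap.ker f) = 1 := by
    rw [hf, ker_psi N hG r, finrank_span_singleton (const_one_ne_zero hG)]
  rw [h3, h5, h6] at h1
  omega

noncomputable def pathAB (hG : G.IsTree) (a b : V) : G.Walk a b :=
  (hG.existsUnique_path a b).choose

lemma pathAB_isPath (hG : G.IsTree) (a b : V) : (pathAB hG a b).IsPath :=
  (hG.existsUnique_path a b).choose_spec.1

lemma pathAB_unique (hG : G.IsTree) {a b : V} (p : G.Walk a b) (hp : p.IsPath) :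
    p = pathAB hG a b :=
  (hG.existsUnique_path a b).choose_spec.2 p hp

noncomputable def pathHyp (hG : G.IsTree) (N : G.edgeSet ≃ Fin n) (a b : V) :
    Submodule ℝ (Fin n → ℝ) :=
  hyp (altVec (edgeIdx N (pathAB hG a b)))

lemma comap_pathHyp (hG : G.IsTree) (r : V) (a b : V) :
    Submodule.comap (psi G r N) (pathHyp hG N a b) = braid a b :=
  comap_hyp_path N hG r (pathAB hG a b)

lemma braid_symm (a b : V) : braid a b = braid b a := by
  ext y; simp [eq_comm]

lemma comap_psi_injective (hG : G.IsTree) (r : V) :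
    Function.Injective (Submodule.comap (psi G r N)) :=
  Submodule.comap_injective_of_surjective (psi_surjective N hG r)

lemma pathHyp_symm (hG : G.IsTree) (a b : V) : pathHyp hG N a b = pathHyp hG N b a := by
  have : Nonempty V := hG.isConnected.nonempty
  have r := Classical.arbitrary V
  apply comap_psi_injective N hG r
  rw [comap_pathHyp N hG r, comap_pathHyp N hG r, braid_symm]

lemma braid_inj {a b c d : V} (hab : a ≠ b) (hcd : c ≠ d) (h : braid a b = braid c d) :
    s(a, b) = s(c, d) := by
  have h1 : ∀ y : V → ℝ, (y a = y b ↔ y c = y d) := fun y => by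
    constructor
    · intro hy; have : y ∈ braid a b := (mem_braid y).mpr hy
      rw [h] at this; exact (mem_braid y).mp this
    · intro hy; have : y ∈ braid c d := (mem_braid y).mpr hy
      rw [← h] at this; exact (mem_braid y).mp this
  have key : ∀ x w : V, x ≠ w → (∀ y : V → ℝ, (y x = y w ↔ y c = y d)) → (x = c ∨ x = d) := by
    intro x w hxw hy
    by_contra hcon
    push_neg at hcon
    have := (hy (fun z => if z = x then (1:ℝ) else 0)).mpr (by
      show (if c = x then (1:ℝ) else 0) = (if d = x then (1:ℝ) else 0)
      rw [if_neg (fun hh => hcon.1 hh.symm), if_neg (fun hh => hcon.2 hh.symm)])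
    rw [if_pos rfl, if_neg hxw.symm] at this
    norm_num at this
  have ha : a = c ∨ a = d := key a b hab h1
  have hb : b = c ∨ b = d := key b a (Ne.symm hab) (fun y => by rw [← h1 y, eq_comm])
  rcases ha with rfl | rfl <;> rcases hb with rfl | rfl
  · exact absurd rfl hab
  · rfl
  · exact Sym2.eq_swap
  · exact absurd rfl hab


noncomputable def pairsF (V : Type*) [Fintype V] [DecidableEq V] : Finset (Sym2 V) :=
  univ.filter (fun q => ¬ q.IsDiag)

lemma mem_pairsF {q : Sym2 V} : q ∈ pairsF V ↔ ¬ q.IsDiag := by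
  simp [pairsF]

noncomputable def Phi2 (hG : G.IsTree) (N : G.edgeSet ≃ Fin n) :
    Sym2 V → Submodule ℝ (Fin n → ℝ) :=
  Sym2.lift ⟨fun a b => pathHyp hG N a b, fun a b => pathHyp_symm N hG a b⟩

@[simp] lemma Phi2_mk (hG : G.IsTree) (a b : V) :
    Phi2 hG N s(a, b) = pathHyp hG N a b := by
  simp [Phi2]

lemma comap_Phi2 (hG : G.IsTree) (r : V) (q : Sym2 V) :
    Submodule.comap (psi G r N) (Phi2 hG N q) = braid2 q := by
  induction q using Sym2.ind with
  | _ a b => rw [Phi2_mk, comap_pathHyp N hG r, braid2_mk]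

lemma A_eq (hG : G.IsTree) (A : Finset (Submodule ℝ (Fin n → ℝ)))
    (hA : (↑A : Set (Submodule ℝ (Fin n → ℝ))) = MASet G N) :
    A = (pairsF V).image (Phi2 hG N) := by
  apply Finset.coe_injective
  rw [hA, Finset.coe_image]
  ext H
  constructor
  · rintro (⟨a, b, p, hlen, hp, rfl⟩ | ⟨a, p, hc, _, _⟩)
    · have hab : a ≠ b := by
        rintro rfl
        rw [SimpleGraph.Walk.isPath_iff_eq_nil] at hp
        subst hp
        simp at hlen
      refine ⟨s(a, b), ?_, ?_⟩
      · rw [Finset.mem_coe, mem_pairsF, Sym2.mk_isDiag_iff]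
        exact hab
      · rw [Phi2_mk]
        unfold pathHyp
        rw [← pathAB_unique hG p hp]
    · exact absurd hc (hG.2 p)
  · rintro ⟨q, hq, rfl⟩
    rw [Finset.mem_coe, mem_pairsF] at hq
    induction q using Sym2.ind with
    | _ a b =>
      rw [Sym2.mk_isDiag_iff] at hq
      left
      refine ⟨a, b, pathAB hG a b, ?_, pathAB_isPath hG a b, by rw [Phi2_mk]; rfl⟩
      rcases Nat.eq_zero_or_pos (pathAB hG a b).length with h0 | h0
      · exact absurd (SimpleGraph.Walk.eq_of_length_eq_zero h0) hq
      · exact h0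

lemma Phi2_injOn (hG : G.IsTree) : Set.InjOn (Phi2 hG N) ↑(pairsF V) := by
  have : Nonempty V := hG.isConnected.nonempty
  have r : V := Classical.arbitrary V
  intro q1 h1 q2 h2 heq
  rw [Finset.mem_coe, mem_pairsF] at h1 h2
  induction q1 using Sym2.ind with
  | _ a b =>
    induction q2 using Sym2.ind with
    | _ c d =>
      rw [Sym2.mk_isDiag_iff] at h1 h2
      have hcom := congrArg (Submodule.comap (psi G r N)) heq
      rw [comap_Phi2 N hG r, comap_Phi2 N hG r, braid2_mk, braid2_mk] at hcom
      exact braid_inj h1 h2 hcom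

lemma comap_finset_inf {ι : Type*} (f : (V → ℝ) →ₗ[ℝ] (Fin n → ℝ))
    (s : Finset ι) (g : ι → Submodule ℝ (Fin n → ℝ)) :
    Submodule.comap f (s.inf g) = s.inf (fun i => Submodule.comap f (g i)) := by
  classical
  induction s using Finset.cons_induction with
  | empty => simp
  | cons a s ha ih => rw [Finset.inf_cons, Finset.inf_cons, Submodule.comap_inf, ih]

lemma descCast : ∀ (k t : ℕ), ((t.descFactorial k : ℕ) : ℝ) = ∏ i ∈ Finset.range k, ((t:ℝ) - i)
  | 0, t => by simp
  | (k+1), t => by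
      rcases le_or_gt k t with h | h
      · rw [Nat.descFactorial_succ, Finset.prod_range_succ, ← descCast k t]
        push_cast [h]
        ring
      · rw [Nat.descFactorial_eq_zero_iff_lt.mpr (by omega)]
        have ht : t ∈ Finset.range (k+1) := Finset.mem_range.mpr (by omega)
        rw [Finset.prod_eq_zero ht (by simp)]
        simp

noncomputable def Mono (t : ℕ) (f : V → Fin t) : Finset (Sym2 V) :=
  (pairsF V).filter
    (fun q => Sym2.lift ⟨fun u v => (f u = f v : Prop), fun u v => propext eq_comm⟩ q)

lemma resp_iff_subset (t : ℕ) (f : V → Fin t) (T : Finset (Sym2 V)) (hT : T ⊆ pairsF V) :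
    (∀ u v : V, s(u,v) ∈ T → f u = f v) ↔ T ⊆ Mono t f := by
  constructor
  · intro h q hq
    refine Finset.mem_filter.mpr ⟨hT hq, ?_⟩
    revert hq
    induction q using Sym2.ind with
    | _ u v =>
      intro hq
      simpa using h u v hq
  · intro h u v huv
    have := h huv
    rw [Mono, Finset.mem_filter] at this
    simpa using this.2

lemma mono_empty_iff (t : ℕ) (f : V → Fin t) :
    Mono t f = ∅ ↔ Function.Injective f := by
  rw [Mono, Finset.filter_eq_empty_iff]
  constructor
  · intro h u v hf
    by_contra hne
    have hq : s(u,v) ∈ pairsF V := mem_pairsF.mpr (by rwa [Sym2.mk_isDiag_iff])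
    exact (h hq) (by simpa using hf)
  · intro hinj q hq
    revert hq
    induction q using Sym2.ind with
    | _ u v =>
      intro hq hlift
      rw [mem_pairsF, Sym2.mk_isDiag_iff] at hq
      exact hq (hinj (by simpa using hlift))

lemma card_inj_fun (t : ℕ) :
    ((univ : Finset (V → Fin t)).filter (fun f => Function.Injective f)).card
      = t.descFactorial (Fintype.card V) := by
  rw [← Fintype.card_subtype,
    Fintype.card_congr (Equiv.subtypeInjectiveEquivEmbedding V (Fin t)),
    Fintype.card_embedding_eq, Fintype.card_fin]

lemma keyNat (hG : G.IsTree) (A : Finset (Submodule ℝ (Fin n → ℝ)))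
    (hA : (↑A : Set (Submodule ℝ (Fin n → ℝ))) = MASet G N) (t : ℕ) (ht : 1 ≤ t) :
    charPolyEval A (t : ℝ) = ∏ i ∈ Finset.range n, ((t:ℝ) - (i + 1)) := by
  have hV : Nonempty V := hG.isConnected.nonempty
  have r : V := Classical.arbitrary V
  have htR : (t:ℝ) ≠ 0 := Nat.cast_ne_zero.mpr (by omega)
  refine mul_left_cancel₀ htR ?_
  calc (t:ℝ) * charPolyEval A (t:ℝ)
      = ∑ S ∈ A.powerset, (-1:ℝ)^S.card * (t:ℝ)^(Module.finrank ℝ ↥(S.inf id) + 1) := by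
        rw [charPolyEval, Finset.mul_sum]
        refine Finset.sum_congr rfl fun S _ => ?_
        rw [pow_succ]
        ring
    _ = ∑ T ∈ (pairsF V).powerset,
          (-1:ℝ)^T.card * (t:ℝ)^(Module.finrank ℝ ↥(T.inf braid2)) := by
        rw [A_eq N hG A hA]
        refine (Finset.sum_bij' (fun T _ => T.image (Phi2 hG N))
          (fun S _ => (pairsF V).filter (fun q => Phi2 hG N q ∈ S)) ?_ ?_ ?_ ?_ ?_).symm
        · intro T hT
          rw [Finset.mem_powerset] at hT ⊢
          exact Finset.image_subset_image hT
        · intro S hS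
          rw [Finset.mem_powerset]
          exact Finset.filter_subset _ _
        · intro T hT
          rw [Finset.mem_powerset] at hT
          apply Finset.Subset.antisymm
          · intro q hq
            rw [Finset.mem_filter] at hq
            obtain ⟨q', hq', heq⟩ := Finset.mem_image.mp hq.2
            rwa [← Phi2_injOn N hG (mem_coe.mpr (hT hq')) (mem_coe.mpr hq.1) heq]
          · intro q hq
            exact Finset.mem_filter.mpr ⟨hT hq, Finset.mem_image_of_mem _ hq⟩
        · intro S hS
          rw [Finset.mem_powerset] at hS
          apply Finset.Subset.antisymm
          · intro H hH
            obtain ⟨q, hq, rfl⟩ := Finset.mem_image.mp hH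
            exact (Finset.mem_filter.mp hq).2
          · intro H hH
            obtain ⟨q, hq, rfl⟩ := Finset.mem_image.mp (hS hH)
            exact Finset.mem_image_of_mem _ (Finset.mem_filter.mpr ⟨hq, hH⟩)
        · intro T hT
          rw [Finset.mem_powerset] at hT
          have hcard : (T.image (Phi2 hG N)).card = T.card :=
            Finset.card_image_of_injOn ((Phi2_injOn N hG).mono hT)
          have hinf : (T.image (Phi2 hG N)).inf id = T.inf (Phi2 hG N) := by
            rw [Finset.inf_image]
            rfl
          have hcomap : Submodule.comap (psi G r N) (T.inf (Phi2 hG N)) = T.inf braid2 := by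
            rw [comap_finset_inf]
            exact Finset.inf_congr rfl (fun q _ => comap_Phi2 N hG r q)
          have hrank : Module.finrank ℝ ↥(T.inf braid2)
              = Module.finrank ℝ ↥((T.image (Phi2 hG N)).inf id) + 1 := by
            rw [← hcomap, finrank_comap_psi N hG r, hinf]
          rw [hcard, hrank]
    _ = ∑ T ∈ (pairsF V).powerset, (-1:ℝ)^T.card *
          (((univ : Finset (V → Fin t)).filter
            (fun f => ∀ u v : V, s(u,v) ∈ T → f u = f v)).card : ℝ) := by
        refine Finset.sum_congr rfl fun T _ => ?_
        congr 1
        have h1 := card_resp T t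
        rw [← Fintype.card_subtype, ← Nat.card_eq_fintype_card, h1]
        push_cast
        rfl
    _ = ∑ f : V → Fin t, ∑ T ∈ (pairsF V).powerset,
          (-1:ℝ)^T.card * (if (∀ u v : V, s(u,v) ∈ T → f u = f v) then 1 else 0) := by
        rw [Finset.sum_comm]
        refine Finset.sum_congr rfl fun T _ => ?_
        rw [← Finset.mul_sum, Finset.sum_boole]
    _ = ∑ f : V → Fin t, (if Mono t f = ∅ then (1:ℝ) else 0) := by
        refine Finset.sum_congr rfl fun f _ => ?_
        have step1 : ∀ T ∈ (pairsF V).powerset,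
            (-1:ℝ)^T.card * (if (∀ u v : V, s(u,v) ∈ T → f u = f v) then (1:ℝ) else 0)
            = (-1:ℝ)^T.card * (if T ⊆ Mono t f then (1:ℝ) else 0) := by
          intro T hT
          rw [Finset.mem_powerset] at hT
          exact congrArg _ (if_congr (resp_iff_subset t f T hT) rfl rfl)
        rw [Finset.sum_congr rfl step1]
        have hsub : (Mono t f).powerset ⊆ (pairsF V).powerset :=
          Finset.powerset_mono.mpr (Finset.filter_subset _ _)
        rw [← Finset.sum_subset hsub (by
          intro T hT1 hT2
          rw [Finset.mem_powerset] at hT2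
          rw [if_neg hT2, mul_zero])]
        have : ∀ T ∈ (Mono t f).powerset,
            (-1:ℝ)^T.card * (if T ⊆ Mono t f then (1:ℝ) else 0) = (-1:ℝ)^T.card := by
          intro T hT
          rw [Finset.mem_powerset] at hT
          rw [if_pos hT, mul_one]
        rw [Finset.sum_congr rfl this]
        have hz := Finset.sum_powerset_neg_one_pow_card (x := Mono t f)
        calc ∑ T ∈ (Mono t f).powerset, (-1:ℝ)^T.card
            = (((∑ T ∈ (Mono t f).powerset, (-1:ℤ)^T.card) : ℤ) : ℝ) := by push_cast; rfl
          _ = (((if Mono t f = ∅ then (1:ℤ) else 0) : ℤ) : ℝ) := by rw [hz]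
          _ = if Mono t f = ∅ then (1:ℝ) else 0 := by split_ifs <;> simp
    _ = (((univ : Finset (V → Fin t)).filter (fun f => Function.Injective f)).card : ℝ) := by
        rw [← Finset.sum_boole]
        refine Finset.sum_congr rfl fun f _ => ?_
        exact if_congr (mono_empty_iff t f) rfl rfl
    _ = ((t.descFactorial (n+1) : ℕ) : ℝ) := by
        rw [card_inj_fun, card_V hG N]
    _ = (t:ℝ) * ∏ i ∈ Finset.range n, ((t:ℝ) - (i + 1)) := by
        rw [descCast, Finset.prod_range_succ']
        push_cast
        simp [mul_comm]

end


/-- If `G` is a tree with `n` edges, then the characteristic polynomial of its matching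
arrangement equals `(t - 1)(t - 2) ⋯ (t - n)`. -/
theorem charPoly_MA_tree {V : Type*} [Fintype V] [DecidableEq V] {n : ℕ}
    (G : SimpleGraph V) (hG : G.IsTree) (N : G.edgeSet ≃ Fin n)
    (A : Finset (Submodule ℝ (Fin n → ℝ)))
    (hA : (↑A : Set (Submodule ℝ (Fin n → ℝ))) = MASet G N) (t : ℝ) :
    charPolyEval A t = ∏ i ∈ Finset.range n, (t - (i + 1)) := by

  classical
  set P : Polynomial ℝ :=
    (∑ S ∈ A.powerset, Polynomial.C ((-1:ℝ)^S.card)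
        * Polynomial.X ^ (Module.finrank ℝ ↥(S.inf id)))
      - ∏ i ∈ Finset.range n, (Polynomial.X - Polynomial.C ((i:ℝ)+1)) with hP
  have heval : ∀ s : ℝ,
      P.eval s = charPolyEval A s - ∏ i ∈ Finset.range n, (s - ((i:ℝ)+1)) := by
    intro s
    rw [hP]
    simp [charPolyEval, Polynomial.eval_finset_sum, Polynomial.eval_prod]
  have hzero : P = 0 := by
    apply Polynomial.eq_zero_of_infinite_isRoot
    apply Set.infinite_of_injective_forall_mem (f := fun k : ℕ => ((k + 1 : ℕ) : ℝ))
    · intro a b hab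
      simp only [Nat.cast_inj] at hab
      omega
    · intro k
      simp only [Set.mem_setOf_eq, Polynomial.IsRoot]
      rw [heval]
      refine sub_eq_zero_of_eq ?_
      have := keyNat N hG A hA (k+1) (by omega)
      convert this using 2 <;> push_cast <;> ring
  have := heval t
  rw [hzero, Polynomial.eval_zero] at this
  exact sub_eq_zero.mp this.symm
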